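/- For every integer n ≥ 6 with n ∉ {8, 9}, J̃(n,3) is maximal as a three-distance set in the hyperplane H(n,3); on the other hand, J̃(8,3) and J̃(9,3) are not maximal as three-distance sets in H(8,3) and H(9,3), respectively. -/

import Mathlib

noncomputable section

/-- The set of distances between distinct points of `S`. -/
def distSet {n : ℕ} (S : Set (EuclideanSpace ℝ (Fin n))) : Set ℝ :=
  {d | ∃ x ∈ S, ∃ y ∈ S, x ≠ y ∧ d = dist x y}

/-- `S` is an `s`-distance set: exactly `s` distances occur between distinct points. -/
def IsSDistanceSet {n : ℕ} (s : ℕ) (S : Set (EuclideanSpace ℝ (Fin n))) : Prop :=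
  (distSet S).Finite ∧ (distSet S).ncard = s

/-- The representation `J̃(n,m)` of the Johnson graph `J(n,m)`: vectors with exactly `m`
coordinates equal to `1` and the rest equal to `0`. -/
def JohnsonRep (n m : ℕ) : Set (EuclideanSpace ℝ (Fin n)) :=
  {x | (∀ i, x i = 0 ∨ x i = 1) ∧ {i : Fin n | x i = 1}.ncard = m}

/-- The hyperplane `H(n,m) = {x : ∑ x_i = m}`. -/
def Hyp (n m : ℕ) : Set (EuclideanSpace ℝ (Fin n)) :=
  {x | ∑ i, x i = (m : ℝ)}

/-- `J̃(n,m)` is maximal as an `m`-distance set in the hyperplane `H(n,m)`. -/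
def JohnsonRepMaximal (n m : ℕ) : Prop :=
  ¬∃ y ∈ Hyp n m \ JohnsonRep n m, IsSDistanceSet m (JohnsonRep n m ∪ {y})

namespace JAux

open Finset

variable {n : ℕ}

lemma distSet_mono {S T : Set (EuclideanSpace ℝ (Fin n))} (h : S ⊆ T) :
    distSet S ⊆ distSet T := by
  rintro d ⟨x, hx, y, hy, hxy, rfl⟩
  exact ⟨x, h hx, y, h hy, hxy, rfl⟩

lemma dist_sq (x y : EuclideanSpace ℝ (Fin n)) :
    dist x y ^ 2 = ∑ i, (x i - y i) ^ 2 := by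
  rw [EuclideanSpace.dist_eq, Real.sq_sqrt]
  · simp [Real.dist_eq, sq_abs]
  · positivity

lemma sum_indicator (P : Fin n → Prop) [DecidablePred P] :
    ∑ i, (if P i then (1:ℝ) else 0) = (univ.filter P).card := by
  rw [Finset.sum_boole]

/-- the support Finset of a Johnson vector -/
lemma johnson_basic {x : EuclideanSpace ℝ (Fin n)} (hx : x ∈ JohnsonRep n 3) :
    (∑ i, x i = 3) ∧ (∑ i, (x i)^2 = 3) := by
  classical
  obtain ⟨h01, hcard⟩ := hx
  have hset : {i : Fin n | x i = 1} = ↑(univ.filter (fun i => x i = 1)) := by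
    ext i; simp
  rw [hset, Set.ncard_coe_finset] at hcard
  constructor
  · have : ∀ i, x i = (if x i = 1 then (1:ℝ) else 0) := by
      intro i; rcases h01 i with h | h <;> simp [h]
    rw [Finset.sum_congr rfl (fun i _ => this i), sum_indicator, hcard]
    norm_num
  · have : ∀ i, (x i)^2 = (if x i = 1 then (1:ℝ) else 0) := by
      intro i; rcases h01 i with h | h <;> simp [h]
    rw [Finset.sum_congr rfl (fun i _ => this i), sum_indicator, hcard]
    norm_num

end JAux

namespace JAux

open Finset

variable {n : ℕ}

lemma johnson_dist_sq {x x' : EuclideanSpace ℝ (Fin n)}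
    (hx : x ∈ JohnsonRep n 3) (hx' : x' ∈ JohnsonRep n 3) :
    dist x x' ^ 2 = 6 - 2 * ((univ.filter (fun i => x i = 1 ∧ x' i = 1)).card : ℝ) := by
  classical
  have h1 := johnson_basic hx
  have h2 := johnson_basic hx'
  have hxy : ∑ i, x i * x' i = ((univ.filter (fun i => x i = 1 ∧ x' i = 1)).card : ℝ) := by
    have : ∀ i, x i * x' i = (if (x i = 1 ∧ x' i = 1) then (1:ℝ) else 0) := by
      intro i
      rcases hx.1 i with h | h <;> rcases hx'.1 i with h' | h' <;> simp [h, h']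
    rw [Finset.sum_congr rfl (fun i _ => this i), sum_indicator]
  rw [dist_sq]
  have : ∀ i, (x i - x' i)^2 = (x i)^2 - 2*(x i * x' i) + (x' i)^2 := fun i => by ring
  rw [Finset.sum_congr rfl (fun i _ => this i)]
  rw [Finset.sum_add_distrib, Finset.sum_sub_distrib, ← Finset.mul_sum]
  rw [h1.2, h2.2, hxy]
  ring

lemma johnson_card_le {x x' : EuclideanSpace ℝ (Fin n)}
    (hx : x ∈ JohnsonRep n 3) :
    (univ.filter (fun i => x i = 1 ∧ x' i = 1)).card ≤ 3 := by
  classical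
  have hset : {i : Fin n | x i = 1} = ↑(univ.filter (fun i => x i = 1)) := by
    ext i; simp
  have hcard := hx.2
  rw [hset, Set.ncard_coe_finset] at hcard
  calc (univ.filter (fun i => x i = 1 ∧ x' i = 1)).card
      ≤ (univ.filter (fun i => x i = 1)).card := by
        apply Finset.card_le_card
        intro i hi
        simp only [mem_filter] at hi ⊢
        exact ⟨hi.1, hi.2.1⟩
    _ = 3 := hcard

lemma johnson_eq_of_card {x x' : EuclideanSpace ℝ (Fin n)}
    (hx : x ∈ JohnsonRep n 3) (hx' : x' ∈ JohnsonRep n 3)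
    (h : (univ.filter (fun i => x i = 1 ∧ x' i = 1)).card = 3) : x = x' := by
  classical
  have hsub : ∀ (z : EuclideanSpace ℝ (Fin n)), z ∈ JohnsonRep n 3 →
      (univ.filter (fun i => x i = 1 ∧ x' i = 1)) ⊆ (univ.filter (fun i => z i = 1)) →
      (univ.filter (fun i => x i = 1 ∧ x' i = 1)) = (univ.filter (fun i => z i = 1)) := by
    intro z hz hsub
    apply Finset.eq_of_subset_of_card_le hsub
    have hset : {i : Fin n | z i = 1} = ↑(univ.filter (fun i => z i = 1)) := by
      ext i; simp
    have hcard := hz.2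
    rw [hset, Set.ncard_coe_finset] at hcard
    rw [hcard, h]
  have e1 := hsub x hx (fun i hi => by simp only [mem_filter] at hi ⊢; exact ⟨hi.1, hi.2.1⟩)
  have e2 := hsub x' hx' (fun i hi => by simp only [mem_filter] at hi ⊢; exact ⟨hi.1, hi.2.2⟩)
  ext i
  rcases hx.1 i with h1 | h1 <;> rcases hx'.1 i with h2 | h2
  · rw [h1, h2]
  · exfalso
    have : i ∈ univ.filter (fun i => x' i = 1) := by simp [h2]
    rw [← e2, e1] at this
    simp only [mem_filter] at this
    rw [this.2] at h1; norm_num at h1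
  · exfalso
    have : i ∈ univ.filter (fun i => x i = 1) := by simp [h1]
    rw [← e1, e2] at this
    simp only [mem_filter] at this
    rw [this.2] at h2; norm_num at h2
  · rw [h1, h2]

end JAux

namespace JAux

open Finset

variable {n : ℕ}

lemma sqrt_facts : Real.sqrt 2 < 2 ∧ (2:ℝ) < Real.sqrt 6 := by
  constructor
  · have h : Real.sqrt 2 < Real.sqrt 4 := Real.sqrt_lt_sqrt (by norm_num) (by norm_num)
    rwa [show (4:ℝ) = 2^2 by norm_num, Real.sqrt_sq (by norm_num : (0:ℝ) ≤ 2)] at h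
  · have h : Real.sqrt 4 < Real.sqrt 6 := Real.sqrt_lt_sqrt (by norm_num) (by norm_num)
    rwa [show (4:ℝ) = 2^2 by norm_num, Real.sqrt_sq (by norm_num : (0:ℝ) ≤ 2)] at h

lemma dist_eq_of_sq {x y : EuclideanSpace ℝ (Fin n)} {c : ℝ} (hc : 0 ≤ c)
    (h : dist x y ^ 2 = c) : dist x y = Real.sqrt c := by
  rw [← h, Real.sqrt_sq dist_nonneg]

lemma johnson_dist_mem {x x' : EuclideanSpace ℝ (Fin n)}
    (hx : x ∈ JohnsonRep n 3) (hx' : x' ∈ JohnsonRep n 3) (hne : x ≠ x') :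
    dist x x' ∈ ({Real.sqrt 2, 2, Real.sqrt 6} : Set ℝ) := by
  classical
  have hd := johnson_dist_sq hx hx'
  set t := (univ.filter (fun i => x i = 1 ∧ x' i = 1)).card with ht
  have hle : t ≤ 3 := johnson_card_le hx
  have hne3 : t ≠ 3 := fun h => hne (johnson_eq_of_card hx hx' h)
  interval_cases t
  · right; right
    exact dist_eq_of_sq (by norm_num) (by rw [hd]; norm_num)
  · right; left
    have : dist x x' = Real.sqrt 4 := dist_eq_of_sq (by norm_num) (by rw [hd]; norm_num)
    rw [this, show (4:ℝ) = 2^2 by norm_num, Real.sqrt_sq (by norm_num : (0:ℝ) ≤ 2)]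
  · left
    exact dist_eq_of_sq (by norm_num) (by rw [hd]; norm_num)
  · exact absurd rfl hne3

/-- indicator vector of a finset -/
def ind (S : Finset (Fin n)) : EuclideanSpace ℝ (Fin n) :=
  WithLp.toLp 2 (fun l => if l ∈ S then 1 else 0)

lemma ind_mem {S : Finset (Fin n)} (hS : S.card = 3) : ind S ∈ JohnsonRep n 3 := by
  constructor
  · intro i; by_cases h : i ∈ S <;> simp [ind, h]
  · have : {i : Fin n | ind S i = 1} = ↑S := by
      ext i; by_cases h : i ∈ S <;> simp [ind, h]
    rw [this, Set.ncard_coe_finset, hS]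

lemma ind_filter (S : Finset (Fin n)) :
    univ.filter (fun i => ind S i = 1) = S := by
  ext i; by_cases h : i ∈ S <;> simp [ind, h]

lemma ind_dist_sq {S S' : Finset (Fin n)} (hS : S.card = 3) (hS' : S'.card = 3) :
    dist (ind S) (ind S') ^ 2 = 6 - 2 * ((S ∩ S').card : ℝ) := by
  classical
  have h := johnson_dist_sq (ind_mem hS) (ind_mem hS')
  have : univ.filter (fun i => ind S i = 1 ∧ ind S' i = 1) = S ∩ S' := by
    ext i
    by_cases h1 : i ∈ S <;> by_cases h2 : i ∈ S' <;> simp [ind, h1, h2]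
  rwa [this] at h

end JAux

namespace JAux

open Finset

variable {n : ℕ}

lemma card3 {i j k : Fin n} (hij : i ≠ j) (hik : i ≠ k) (hjk : j ≠ k) :
    ({i, j, k} : Finset (Fin n)).card = 3 := by
  rw [Finset.card_insert_of_notMem (by simp [hij, hik]),
    Finset.card_insert_of_notMem (by simp [hjk]), Finset.card_singleton]

lemma distSet_johnson (hn : 6 ≤ n) :
    distSet (JohnsonRep n 3) = ({Real.sqrt 2, 2, Real.sqrt 6} : Set ℝ) := by
  classical
  apply Set.Subset.antisymm
  · rintro d ⟨x, hx, x', hx', hne, rfl⟩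
    exact johnson_dist_mem hx hx' hne
  · have k0 : Fin n := ⟨0, by omega⟩
    set i0 : Fin n := ⟨0, by omega⟩
    set i1 : Fin n := ⟨1, by omega⟩
    set i2 : Fin n := ⟨2, by omega⟩
    set i3 : Fin n := ⟨3, by omega⟩
    set i4 : Fin n := ⟨4, by omega⟩
    set i5 : Fin n := ⟨5, by omega⟩
    have hS1 : ({i0, i1, i2} : Finset (Fin n)).card = 3 :=
      card3 (by simp [i0, i1, Fin.ext_iff]) (by simp [i0, i2, Fin.ext_iff])
        (by simp [i1, i2, Fin.ext_iff])
    have hS2 : ({i0, i1, i3} : Finset (Fin n)).card = 3 :=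
      card3 (by simp [i0, i1, Fin.ext_iff]) (by simp [i0, i3, Fin.ext_iff])
        (by simp [i1, i3, Fin.ext_iff])
    have hS3 : ({i0, i3, i4} : Finset (Fin n)).card = 3 :=
      card3 (by simp [i0, i3, Fin.ext_iff]) (by simp [i0, i4, Fin.ext_iff])
        (by simp [i3, i4, Fin.ext_iff])
    have hS4 : ({i3, i4, i5} : Finset (Fin n)).card = 3 :=
      card3 (by simp [i3, i4, Fin.ext_iff]) (by simp [i3, i5, Fin.ext_iff])
        (by simp [i4, i5, Fin.ext_iff])
    have hmem : ∀ (S S' : Finset (Fin n)) (h : S.card = 3) (h' : S'.card = 3) (c : ℕ),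
        (S ∩ S').card = c → c < 3 →
        dist (ind S) (ind S') ∈ distSet (JohnsonRep n 3) := by
      intro S S' h h' c hc hlt
      refine ⟨ind S, ind_mem h, ind S', ind_mem h', ?_, rfl⟩
      intro he
      have : S = S' := by
        have := ind_filter (n := n) S
        rw [he, ind_filter] at this
        exact this.symm
      rw [this, Finset.inter_self, h'] at hc
      omega
    rintro d (rfl | rfl | rfl)
    · -- sqrt 2 : intersection of size 2
      have hint : (({i0, i1, i2} : Finset (Fin n)) ∩ {i0, i1, i3}).card = 2 := by
        have : (({i0, i1, i2} : Finset (Fin n)) ∩ {i0, i1, i3}) = {i0, i1} := by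
          ext l
          simp only [Finset.mem_inter, Finset.mem_insert, Finset.mem_singleton,
            i0, i1, i2, i3, Fin.ext_iff]
          omega
        rw [this, Finset.card_insert_of_notMem (by simp [i0, i1, Fin.ext_iff]),
          Finset.card_singleton]
      have hd : dist (ind ({i0, i1, i2} : Finset (Fin n))) (ind {i0, i1, i3}) = Real.sqrt 2 := by
        apply dist_eq_of_sq (by norm_num)
        rw [ind_dist_sq hS1 hS2, hint]; norm_num
      rw [← hd]; exact hmem _ _ hS1 hS2 2 hint (by norm_num)
    · have hint : (({i0, i1, i2} : Finset (Fin n)) ∩ {i0, i3, i4}).card = 1 := by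
        have : (({i0, i1, i2} : Finset (Fin n)) ∩ {i0, i3, i4}) = {i0} := by
          ext l
          simp only [Finset.mem_inter, Finset.mem_insert, Finset.mem_singleton,
            i0, i1, i2, i3, i4, Fin.ext_iff]
          omega
        rw [this, Finset.card_singleton]
      have hd : dist (ind ({i0, i1, i2} : Finset (Fin n))) (ind {i0, i3, i4}) = 2 := by
        have h4 : dist (ind ({i0, i1, i2} : Finset (Fin n))) (ind {i0, i3, i4})
            = Real.sqrt 4 := by
          apply dist_eq_of_sq (by norm_num)
          rw [ind_dist_sq hS1 hS3, hint]; norm_num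
        rw [h4, show (4:ℝ) = 2^2 by norm_num, Real.sqrt_sq (by norm_num : (0:ℝ) ≤ 2)]
      rw [← hd]; exact hmem _ _ hS1 hS3 1 hint (by norm_num)
    · have hint : (({i0, i1, i2} : Finset (Fin n)) ∩ {i3, i4, i5}).card = 0 := by
        have : (({i0, i1, i2} : Finset (Fin n)) ∩ {i3, i4, i5}) = ∅ := by
          ext l
          simp only [Finset.mem_inter, Finset.mem_insert, Finset.mem_singleton,
            Finset.notMem_empty, i0, i1, i2, i3, i4, i5, Fin.ext_iff, iff_false, not_and]
          omega
        rw [this, Finset.card_empty]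
      have hd : dist (ind ({i0, i1, i2} : Finset (Fin n))) (ind {i3, i4, i5})
          = Real.sqrt 6 := by
        apply dist_eq_of_sq (by norm_num)
        rw [ind_dist_sq hS1 hS4, hint]; norm_num
      rw [← hd]; exact hmem _ _ hS1 hS4 0 hint (by norm_num)

end JAux

namespace JAux

open Finset

variable {n : ℕ}

lemma three_set_ncard : ({Real.sqrt 2, 2, Real.sqrt 6} : Set ℝ).ncard = 3 := by
  rw [Set.ncard_eq_three]
  refine ⟨_, _, _, ?_, ?_, ?_, rfl⟩
  · exact ne_of_lt sqrt_facts.1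
  · exact ne_of_lt (lt_trans sqrt_facts.1 sqrt_facts.2)
  · exact ne_of_lt sqrt_facts.2

lemma dist_sq_expand (x y : EuclideanSpace ℝ (Fin n)) :
    dist x y ^ 2 = ∑ i, (x i)^2 - 2 * ∑ i, x i * y i + ∑ i, (y i)^2 := by
  rw [dist_sq]
  have : ∀ i, (x i - y i)^2 = (x i)^2 - 2*(x i * y i) + (y i)^2 := fun i => by ring
  rw [Finset.sum_congr rfl (fun i _ => this i), Finset.sum_add_distrib,
    Finset.sum_sub_distrib, ← Finset.mul_sum]

lemma not_max_of_point (hn : 6 ≤ n) (y : EuclideanSpace ℝ (Fin n))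
    (hyH : y ∈ Hyp n 3) (hyJ : y ∉ JohnsonRep n 3)
    (hdist : ∀ x ∈ JohnsonRep n 3, dist x y ∈ ({Real.sqrt 2, 2, Real.sqrt 6} : Set ℝ)) :
    ¬ JohnsonRepMaximal n 3 := by
  rw [JohnsonRepMaximal, not_not]
  refine ⟨y, ⟨hyH, hyJ⟩, ?_⟩
  have hEq : distSet (JohnsonRep n 3 ∪ {y}) = ({Real.sqrt 2, 2, Real.sqrt 6} : Set ℝ) := by
    apply Set.Subset.antisymm
    · rintro d ⟨x, hx, x', hx', hne, rfl⟩
      rcases hx with hx | hx <;> rcases hx' with hx' | hx'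
      · exact johnson_dist_mem hx hx' hne
      · rw [Set.mem_singleton_iff] at hx'; subst hx'
        exact hdist x hx
      · rw [Set.mem_singleton_iff] at hx; subst hx
        rw [dist_comm]
        exact hdist x' hx'
      · rw [Set.mem_singleton_iff] at hx hx'; subst hx; subst hx'
        exact absurd rfl hne
    · rw [← distSet_johnson hn]
      exact distSet_mono Set.subset_union_left
  constructor
  · rw [hEq]
    exact (Set.finite_singleton _).insert _ |>.insert _
  · rw [hEq]
    exact three_set_ncard

lemma not_max_nine : ¬ JohnsonRepMaximal 9 3 := by
  apply not_max_of_point (by norm_num) (WithLp.toLp 2 (fun _ => 1/3))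
  · show (∑ _i : Fin 9, (1/3 : ℝ)) = 3
    simp
    norm_num
  · intro h
    rcases h.1 ⟨0, by norm_num⟩ with h0 | h0 <;> norm_num at h0
  · intro x hx
    have hb := johnson_basic hx
    have hd : dist x (WithLp.toLp 2 (fun _ => (1/3:ℝ))) ^ 2 = 2 := by
      rw [dist_sq_expand]
      have h1 : ∑ i : Fin 9, x i * (1/3:ℝ) = 1 := by
        rw [← Finset.sum_mul, hb.1]; norm_num
      have h2 : ∑ _i : Fin 9, ((1/3:ℝ))^2 = 1 := by
        rw [Finset.sum_const]; norm_num
      rw [hb.2, h1, h2]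
      norm_num
    left
    exact dist_eq_of_sq (by norm_num) hd

end JAux

namespace JAux

open Finset

lemma not_max_eight : ¬ JohnsonRepMaximal 8 3 := by
  apply not_max_of_point (by norm_num) (WithLp.toLp 2 (fun i => if i = 0 then -(1/2:ℝ) else 1/2))
  · show (∑ i : Fin 8, (if i = 0 then -(1/2:ℝ) else 1/2)) = 3
    rw [show (univ : Finset (Fin 8)) = insert 0 (univ.erase 0) by
      rw [Finset.insert_erase (Finset.mem_univ 0)]]
    rw [Finset.sum_insert (Finset.notMem_erase _ _)]
    rw [Finset.sum_congr rfl (fun i hi => by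
      rw [if_neg (Finset.ne_of_mem_erase hi)])]
    rw [Finset.sum_const]
    simp
    norm_num
  · intro h
    rcases h.1 0 with h0 | h0 <;> norm_num at h0
  · intro x hx
    have hb := johnson_basic hx
    have h01 := hx.1
    have h1 : ∑ i : Fin 8, x i * (if i = 0 then -(1/2:ℝ) else 1/2) = 3/2 - x 0 := by
      have : ∀ i : Fin 8, x i * (if i = 0 then -(1/2:ℝ) else 1/2)
          = (1/2) * x i - (if i = 0 then x i else 0) := by
        intro i; by_cases h : i = 0 <;> simp [h] <;> ring
      rw [Finset.sum_congr rfl (fun i _ => this i), Finset.sum_sub_distrib,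
        ← Finset.mul_sum, hb.1, Finset.sum_ite_eq' univ 0 x]
      simp
      norm_num
    have h2 : ∑ i : Fin 8, ((if i = 0 then -(1/2:ℝ) else 1/2))^2 = 2 := by
      have : ∀ i : Fin 8, ((if i = 0 then -(1/2:ℝ) else 1/2))^2 = (1/4 : ℝ) := by
        intro i; by_cases h : i = 0 <;> simp [h] <;> norm_num
      rw [Finset.sum_congr rfl (fun i _ => this i), Finset.sum_const]
      simp
      norm_num
    have hd : dist x (WithLp.toLp 2 (fun i => if i = 0 then -(1/2:ℝ) else 1/2)) ^ 2 = 2 + 2 * x 0 := by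
      rw [dist_sq_expand, hb.2, h1, h2]
      ring
    rcases h01 0 with h0 | h0
    · left
      exact dist_eq_of_sq (by norm_num) (by rw [hd, h0]; norm_num)
    · right; left
      have h4 : dist x (WithLp.toLp 2 (fun i => if i = 0 then -(1/2:ℝ) else 1/2)) = Real.sqrt 4 :=
        dist_eq_of_sq (by norm_num) (by rw [hd, h0]; norm_num)
      rw [h4, show (4:ℝ) = 2^2 by norm_num, Real.sqrt_sq (by norm_num : (0:ℝ) ≤ 2)]

end JAux

namespace JAux

open Finset

variable {n : ℕ}

lemma exists_two {α : Type*} {s : Finset α} (h : 2 ≤ s.card) :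
    ∃ a ∈ s, ∃ b ∈ s, a ≠ b := Finset.one_lt_card.1 h

lemma exists_three {α : Type*} [DecidableEq α] {s : Finset α} (h : 3 ≤ s.card) :
    ∃ a ∈ s, ∃ b ∈ s, ∃ c ∈ s, a ≠ b ∧ a ≠ c ∧ b ≠ c := by
  obtain ⟨t, hts, htc⟩ := Finset.exists_subset_card_eq h
  rw [Finset.card_eq_three] at htc
  obtain ⟨a, b, c, hab, hac, hbc, rfl⟩ := htc
  exact ⟨a, hts (by simp), b, hts (by simp), c, hts (by simp), hab, hac, hbc⟩

lemma exists_pair_avoid (hn : 4 ≤ n) (i j : Fin n) :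
    ∃ k l : Fin n, k ≠ l ∧ k ≠ i ∧ k ≠ j ∧ l ≠ i ∧ l ≠ j := by
  classical
  have hcard : 2 ≤ ((univ : Finset (Fin n)) \ {i, j}).card := by
    have h1 : ({i, j} : Finset (Fin n)).card ≤ 2 := by
      apply le_trans (Finset.card_insert_le _ _)
      rw [Finset.card_singleton]
    have h2 := Finset.card_sdiff_of_subset (Finset.subset_univ ({i, j} : Finset (Fin n)))
    rw [Finset.card_univ, Fintype.card_fin] at h2
    omega
  obtain ⟨k, hk, l, hl, hkl⟩ := exists_two hcard
  simp only [Finset.mem_sdiff, Finset.mem_insert, Finset.mem_singleton, Finset.mem_univ,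
    true_and, not_or] at hk hl
  exact ⟨k, l, hkl, hk.1, hk.2, hl.1, hl.2⟩

lemma leafEq3 {N a ssq K M t : ℝ} (hu : N*a = 3 - K)
    (hNs : N*ssq = (3-K)^2 + 2*K*(3-K) + M*N)
    (h : 2*(3*a+t) = ssq + 1 ∨ 2*(3*a+t) = ssq - 1 ∨ 2*(3*a+t) = ssq - 3) :
    6*(3-K) + 2*t*N = (3-K)^2 + 2*K*(3-K) + M*N + N ∨
    6*(3-K) + 2*t*N = (3-K)^2 + 2*K*(3-K) + M*N - N ∨
    6*(3-K) + 2*t*N = (3-K)^2 + 2*K*(3-K) + M*N - 3*N := by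
  rcases h with h|h|h
  · left; linear_combination N*h - 6*hu + hNs
  · right; left; linear_combination N*h - 6*hu + hNs
  · right; right; linear_combination N*h - 6*hu + hNs

lemma windowF {ssq σ σ' : ℝ}
    (h : 2*σ = ssq + 1 ∨ 2*σ = ssq - 1 ∨ 2*σ = ssq - 3)
    (h' : 2*σ' = ssq + 1 ∨ 2*σ' = ssq - 1 ∨ 2*σ' = ssq - 3)
    (hd : σ + 3 ≤ σ') : False := by
  rcases h with h|h|h <;> rcases h' with h'|h'|h' <;> linarith

end JAux

namespace JAux

open Finset

set_option maxHeartbeats 2000000 in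
lemma maximal {n : ℕ} (hn : 6 ≤ n) (h8 : n ≠ 8) (h9 : n ≠ 9) : JohnsonRepMaximal n 3 := by
  classical
  rw [JohnsonRepMaximal]
  rintro ⟨y, ⟨hyH, hyJ⟩, hfin, hcard⟩
  have hnR : (6:ℝ) ≤ (n:ℝ) := by exact_mod_cast hn
  have hEq : distSet (JohnsonRep n 3 ∪ {y}) = ({Real.sqrt 2, 2, Real.sqrt 6} : Set ℝ) := by
    refine (Set.eq_of_subset_of_ncard_le ?_ ?_ hfin).symm
    · rw [← distSet_johnson hn]; exact distSet_mono Set.subset_union_left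
    · rw [hcard, three_set_ncard]
  have hy3 : ∑ i, y i = 3 := by
    have := hyH
    simp only [Hyp, Set.mem_setOf_eq, Nat.cast_ofNat] at this
    exact this
  set ssq := ∑ i, (y i)^2 with hssqdef
  -- Key lemma
  have hK : ∀ i j k : Fin n, i ≠ j → i ≠ k → j ≠ k →
      2*(y i + y j + y k) = ssq + 1 ∨ 2*(y i + y j + y k) = ssq - 1 ∨
      2*(y i + y j + y k) = ssq - 3 := by
    intro i j k hij hik hjk
    have hc3 : ({i, j, k} : Finset (Fin n)).card = 3 := card3 hij hik hjk
    have hxJ : ind ({i, j, k} : Finset (Fin n)) ∈ JohnsonRep n 3 := ind_mem hc3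
    have hxy : ind ({i, j, k} : Finset (Fin n)) ≠ y := fun h => hyJ (h ▸ hxJ)
    have hd : dist (ind ({i, j, k} : Finset (Fin n))) y
        ∈ ({Real.sqrt 2, 2, Real.sqrt 6} : Set ℝ) := by
      rw [← hEq]
      exact ⟨_, Or.inl hxJ, y, Or.inr rfl, hxy, rfl⟩
    have hsxy : ∑ l, ind ({i, j, k} : Finset (Fin n)) l * y l = y i + y j + y k := by
      have hterm : ∀ l, ind ({i, j, k} : Finset (Fin n)) l * y l
          = if l ∈ ({i, j, k} : Finset (Fin n)) then y l else 0 := by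
        intro l
        by_cases h : l ∈ ({i, j, k} : Finset (Fin n)) <;> simp [ind, h] <;> simp at h <;> tauto
      rw [Finset.sum_congr rfl (fun l _ => hterm l), Finset.sum_ite_mem, Finset.univ_inter,
        Finset.sum_insert (by simp [hij, hik]), Finset.sum_insert (by simp [hjk]),
        Finset.sum_singleton]
      ring
    have hdsq : dist (ind ({i, j, k} : Finset (Fin n))) y ^ 2
        = 3 - 2*(y i + y j + y k) + ssq := by
      rw [dist_sq_expand, (johnson_basic hxJ).2, hsxy]
    rcases hd with h|h|h
    · left
      have h2 : dist (ind ({i, j, k} : Finset (Fin n))) y ^ 2 = 2 := by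
        rw [h]; exact Real.sq_sqrt (by norm_num)
      linarith
    · right; left
      have h2 : dist (ind ({i, j, k} : Finset (Fin n))) y ^ 2 = 4 := by
        rw [h]; norm_num
      linarith
    · right; right
      have h2 : dist (ind ({i, j, k} : Finset (Fin n))) y ^ 2 = 6 := by
        rw [h]; exact Real.sq_sqrt (by norm_num)
      linarith
  -- minimum coordinate
  obtain ⟨i₀, -, hmin⟩ := Finset.exists_min_image (univ : Finset (Fin n)) y
    ⟨⟨0, by omega⟩, Finset.mem_univ _⟩
  set a := y i₀ with ha
  -- all values in {a, a+1, a+2}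
  have hval : ∀ i, y i = a ∨ y i = a + 1 ∨ y i = a + 2 := by
    intro i
    by_cases hii : i = i₀
    · left; rw [hii]
    obtain ⟨k, l, hkl, hki, hki₀, hli, hli₀⟩ := exists_pair_avoid (by omega) i i₀
    have h1 := hK i k l (Ne.symm hki) (Ne.symm hli) hkl
    have h2 := hK i₀ k l (Ne.symm hki₀) (Ne.symm hli₀) hkl
    rw [← ha] at h2
    have hai : a ≤ y i := by rw [ha]; exact hmin i (Finset.mem_univ i)
    rcases h1 with h1|h1|h1 <;> rcases h2 with h2|h2|h2 <;>
      first
      | (left; linarith)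
      | (right; left; linarith)
      | (right; right; linarith)
  -- level sets
  set A := univ.filter (fun i => y i = a) with hA
  set B := univ.filter (fun i => y i = a + 1) with hB
  set C := univ.filter (fun i => y i = a + 2) with hC
  have hAv : ∀ i ∈ A, y i = a := fun i hi => (Finset.mem_filter.1 hi).2
  have hBv : ∀ i ∈ B, y i = a + 1 := fun i hi => (Finset.mem_filter.1 hi).2
  have hCv : ∀ i ∈ C, y i = a + 2 := fun i hi => (Finset.mem_filter.1 hi).2
  have hdAB : Disjoint A B := by
    rw [Finset.disjoint_left]
    intro i hi hib
    have := hAv i hi; have := hBv i hib; linarith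
  have hdAC : Disjoint A C := by
    rw [Finset.disjoint_left]
    intro i hi hib
    have := hAv i hi; have := hCv i hib; linarith
  have hdBC : Disjoint B C := by
    rw [Finset.disjoint_left]
    intro i hi hib
    have := hBv i hi; have := hCv i hib; linarith
  have hdABC : Disjoint (A ∪ B) C := Finset.disjoint_union_left.2 ⟨hdAC, hdBC⟩
  have hunion : A ∪ B ∪ C = univ := by
    ext i
    simp only [Finset.mem_union, hA, hB, hC, Finset.mem_filter, Finset.mem_univ, true_and,
      iff_true]
    exact or_assoc.mpr (hval i)
  have hpqr : A.card + B.card + C.card = n := by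
    have h1 : (A ∪ B ∪ C).card = n := by rw [hunion, Finset.card_univ, Fintype.card_fin]
    rw [Finset.card_union_of_disjoint hdABC, Finset.card_union_of_disjoint hdAB] at h1
    exact h1
  have hi₀A : i₀ ∈ A := Finset.mem_filter.2 ⟨Finset.mem_univ _, ha.symm⟩
  have hpge : 1 ≤ A.card := Finset.card_pos.2 ⟨i₀, hi₀A⟩
  have hABne : ∀ i ∈ A, ∀ j ∈ B, i ≠ j :=
    fun i hi j hj h => (Finset.disjoint_left.1 hdAB hi) (h ▸ hj)
  have hACne : ∀ i ∈ A, ∀ j ∈ C, i ≠ j :=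
    fun i hi j hj h => (Finset.disjoint_left.1 hdAC hi) (h ▸ hj)
  have hBCne : ∀ i ∈ B, ∀ j ∈ C, i ≠ j :=
    fun i hi j hj h => (Finset.disjoint_left.1 hdBC hi) (h ▸ hj)
  -- sum identities
  have hsumA : ∑ i ∈ A, y i = (A.card : ℝ) * a := by
    rw [Finset.sum_congr rfl hAv, Finset.sum_const, nsmul_eq_mul]
  have hsumB : ∑ i ∈ B, y i = (B.card : ℝ) * (a+1) := by
    rw [Finset.sum_congr rfl hBv, Finset.sum_const, nsmul_eq_mul]
  have hsumC : ∑ i ∈ C, y i = (C.card : ℝ) * (a+2) := by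
    rw [Finset.sum_congr rfl hCv, Finset.sum_const, nsmul_eq_mul]
  have hsqA : ∑ i ∈ A, (y i)^2 = (A.card : ℝ) * a^2 := by
    rw [Finset.sum_congr rfl (fun i hi => by rw [hAv i hi]), Finset.sum_const, nsmul_eq_mul]
  have hsqB : ∑ i ∈ B, (y i)^2 = (B.card : ℝ) * (a+1)^2 := by
    rw [Finset.sum_congr rfl (fun i hi => by rw [hBv i hi]), Finset.sum_const, nsmul_eq_mul]
  have hsqC : ∑ i ∈ C, (y i)^2 = (C.card : ℝ) * (a+2)^2 := by
    rw [Finset.sum_congr rfl (fun i hi => by rw [hCv i hi]), Finset.sum_const, nsmul_eq_mul]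
  have hsum : (A.card:ℝ)*a + (B.card:ℝ)*(a+1) + (C.card:ℝ)*(a+2) = 3 := by
    have h3 : ∑ i ∈ A, y i + ∑ i ∈ B, y i + ∑ i ∈ C, y i = 3 := by
      rw [← Finset.sum_union hdAB, ← Finset.sum_union hdABC, hunion, hy3]
    rw [hsumA, hsumB, hsumC] at h3
    exact h3
  have hssqe : ssq = (A.card:ℝ)*a^2 + (B.card:ℝ)*(a+1)^2 + (C.card:ℝ)*(a+2)^2 := by
    have h3 : ∑ i ∈ A, (y i)^2 + ∑ i ∈ B, (y i)^2 + ∑ i ∈ C, (y i)^2 = ssq := by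
      rw [← Finset.sum_union hdAB, ← Finset.sum_union hdABC, hunion]
    rw [hsqA, hsqB, hsqC] at h3
    exact h3.symm
  have hpqrR : (A.card:ℝ) + (B.card:ℝ) + (C.card:ℝ) = (n:ℝ) := by exact_mod_cast hpqr
  have hu : (n:ℝ)*a = 3 - ((B.card:ℝ) + 2*(C.card:ℝ)) := by
    linear_combination hsum - a * hpqrR
  have hs2 : ssq = (n:ℝ)*a^2 + 2*((B.card:ℝ)+2*(C.card:ℝ))*a + ((B.card:ℝ)+4*(C.card:ℝ)) := by
    linear_combination hssqe + a^2 * hpqrR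
  have hNs : (n:ℝ)*ssq = (3 - ((B.card:ℝ)+2*(C.card:ℝ)))^2
      + 2*((B.card:ℝ)+2*(C.card:ℝ))*(3 - ((B.card:ℝ)+2*(C.card:ℝ)))
      + ((B.card:ℝ)+4*(C.card:ℝ))*(n:ℝ) := by
    linear_combination (n:ℝ)*hs2 + ((n:ℝ)*a + 3 - ((B.card:ℝ)+2*(C.card:ℝ)))*hu
      + 2*((B.card:ℝ)+2*(C.card:ℝ))*hu
  -- case analysis
  by_cases hr0 : C.card = 0
  · have hr' : ((C.card:ℕ):ℝ) = 0 := by rw [hr0]; norm_num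
    by_cases hq0 : B.card = 0
    · -- L1 : constant vector, n = 9
      have hq' : ((B.card:ℕ):ℝ) = 0 := by rw [hq0]; norm_num
      obtain ⟨i, hi, j, hj, k, hk, hij, hik, hjk⟩ := exists_three (s := A) (by omega)
      have hσ := hK i j k hij hik hjk
      rw [hAv i hi, hAv j hj, hAv k hk, show a + a + a = 3*a + 0 from by ring] at hσ
      rcases leafEq3 hu hNs hσ with key|key|key <;> rw [hq', hr'] at key <;> ring_nf at key
      · exact h9 (by exact_mod_cast (show (n:ℝ) = 9 by linarith))
      · linarith
      · linarith
    by_cases hq1 : B.card = 1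
    · -- L3
      have hq' : ((B.card:ℕ):ℝ) = 1 := by rw [hq1]; norm_num
      obtain ⟨i, hi, j, hj, k, hk, hij, hik, hjk⟩ := exists_three (s := A) (by omega)
      have hσ := hK i j k hij hik hjk
      rw [hAv i hi, hAv j hj, hAv k hk, show a + a + a = 3*a + 0 from by ring] at hσ
      rcases leafEq3 hu hNs hσ with key|key|key <;> rw [hq', hr'] at key <;> ring_nf at key <;>
        linarith
    by_cases hq2 : B.card = 2
    · -- L4
      have hq' : ((B.card:ℕ):ℝ) = 2 := by rw [hq2]; norm_num
      obtain ⟨i, hi, j, hj, k, hk, hij, hik, hjk⟩ := exists_three (s := A) (by omega)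
      have hσ := hK i j k hij hik hjk
      rw [hAv i hi, hAv j hj, hAv k hk, show a + a + a = 3*a + 0 from by ring] at hσ
      rcases leafEq3 hu hNs hσ with key|key|key <;> rw [hq', hr'] at key <;> ring_nf at key <;>
        linarith
    by_cases hp1 : A.card = 1
    · -- L5 : n = 8
      have hq' : ((B.card:ℕ):ℝ) = (n:ℝ) - 1 := by
        have h' : B.card + 1 = n := by omega
        have := congrArg (fun m : ℕ => (m:ℝ)) h'
        push_cast at this
        linarith
      obtain ⟨j, hj, k, hk, hjk⟩ := exists_two (s := B) (by omega)
      have hσ := hK i₀ j k (hABne i₀ hi₀A j hj) (hABne i₀ hi₀A k hk) hjk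
      rw [← ha, hBv j hj, hBv k hk, show a + (a+1) + (a+1) = 3*a + 2 from by ring] at hσ
      rcases leafEq3 hu hNs hσ with key|key|key <;> rw [hq', hr'] at key <;> ring_nf at key
      · linarith
      · exact h8 (by exact_mod_cast (show (n:ℝ) = 8 by linarith))
      · linarith
    by_cases hp2 : A.card = 2
    · -- L6 : 25 = (6+e) n
      have hq' : ((B.card:ℕ):ℝ) = (n:ℝ) - 2 := by
        have h' : B.card + 2 = n := by omega
        have := congrArg (fun m : ℕ => (m:ℝ)) h'
        push_cast at this
        linarith
      obtain ⟨i, hi, j, hj, hij⟩ := exists_two (s := A) (by omega)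
      obtain ⟨k, hk⟩ := Finset.card_pos.mp (show 0 < B.card by omega)
      have hσ := hK i j k hij (hABne i hi k hk) (hABne j hj k hk)
      rw [hAv i hi, hAv j hj, hBv k hk, show a + a + (a+1) = 3*a + 1 from by ring] at hσ
      rcases leafEq3 hu hNs hσ with key|key|key <;> rw [hq', hr'] at key <;> ring_nf at key
      · have hZ : 7 * n = 25 := by
          exact_mod_cast (show (7:ℝ) * n = 25 by linarith)
        omega
      · linarith
      · have hZ : 3 * n = 25 := by
          exact_mod_cast (show (3:ℝ) * n = 25 by linarith)
        omega
    · -- L2' : p ≥ 3, q ≥ 3 window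
      obtain ⟨i, hi, j, hj, k, hk, hij, hik, hjk⟩ := exists_three (s := A) (by omega)
      obtain ⟨i', hi', j', hj', k', hk', hij', hik', hjk'⟩ := exists_three (s := B) (by omega)
      have hσ := hK i j k hij hik hjk
      have hσ' := hK i' j' k' hij' hik' hjk'
      rw [hAv i hi, hAv j hj, hAv k hk] at hσ
      rw [hBv i' hi', hBv j' hj', hBv k' hk'] at hσ'
      exact windowF hσ hσ' (by linarith)
  · -- r ≥ 1
    by_cases hp1 : A.card = 1
    · by_cases hq0 : B.card = 0
      · -- L12 : r = n - 1
        have hq' : ((B.card:ℕ):ℝ) = 0 := by rw [hq0]; norm_num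
        have hr' : ((C.card:ℕ):ℝ) = (n:ℝ) - 1 := by
          have h' : C.card + 1 = n := by omega
          have := congrArg (fun m : ℕ => (m:ℝ)) h'
          push_cast at this
          linarith
        obtain ⟨j, hj, k, hk, hjk⟩ := exists_two (s := C) (by omega)
        have hσ := hK i₀ j k (hACne i₀ hi₀A j hj) (hACne i₀ hi₀A k hk) hjk
        rw [← ha, hCv j hj, hCv k hk, show a + (a+2) + (a+2) = 3*a + 4 from by ring] at hσ
        rcases leafEq3 hu hNs hσ with key|key|key <;> rw [hq', hr'] at key <;> ring_nf at key
        · have hZ : 9 * n = 25 := by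
            exact_mod_cast (show (9:ℝ) * n = 25 by linarith)
          omega
        · have hZ : 7 * n = 25 := by
            exact_mod_cast (show (7:ℝ) * n = 25 by linarith)
          omega
        · linarith
      by_cases hr1 : C.card = 1
      · -- L15 : n = 9
        have hq' : ((B.card:ℕ):ℝ) = (n:ℝ) - 2 := by
          have h' : B.card + 2 = n := by omega
          have := congrArg (fun m : ℕ => (m:ℝ)) h'
          push_cast at this
          linarith
        have hr' : ((C.card:ℕ):ℝ) = 1 := by rw [hr1]; norm_num
        obtain ⟨j, hj, k, hk, hjk⟩ := exists_two (s := B) (by omega)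
        have hσ := hK i₀ j k (hABne i₀ hi₀A j hj) (hABne i₀ hi₀A k hk) hjk
        rw [← ha, hBv j hj, hBv k hk, show a + (a+1) + (a+1) = 3*a + 2 from by ring] at hσ
        rcases leafEq3 hu hNs hσ with key|key|key <;> rw [hq', hr'] at key <;> ring_nf at key
        · linarith
        · linarith
        · exact h9 (by exact_mod_cast (show (n:ℝ) = 9 by linarith))
      by_cases hq1 : B.card = 1
      · -- L14 : window 3a+3 vs 3a+6, r ≥ 3
        obtain ⟨j, hj⟩ := Finset.card_pos.mp (show 0 < B.card by omega)
        obtain ⟨k, hk⟩ := Finset.card_pos.mp (show 0 < C.card by omega)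
        obtain ⟨i', hi', j', hj', k', hk', hij', hik', hjk'⟩ := exists_three (s := C) (by omega)
        have hσ := hK i₀ j k (hABne i₀ hi₀A j hj) (hACne i₀ hi₀A k hk) (hBCne j hj k hk)
        have hσ' := hK i' j' k' hij' hik' hjk'
        rw [← ha, hBv j hj, hCv k hk] at hσ
        rw [hCv i' hi', hCv j' hj', hCv k' hk'] at hσ'
        exact windowF hσ hσ' (by linarith)
      · -- L13 : q ≥ 2, r ≥ 2 window 3a+2 vs 3a+5
        obtain ⟨j, hj, k, hk, hjk⟩ := exists_two (s := B) (by omega)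
        obtain ⟨j', hj', k', hk', hjk'⟩ := exists_two (s := C) (by omega)
        have hσ := hK i₀ j k (hABne i₀ hi₀A j hj) (hABne i₀ hi₀A k hk) hjk
        have hσ' := hK j j' k' (hBCne j hj j' hj') (hBCne j hj k' hk') hjk'
        rw [← ha, hBv j hj, hBv k hk] at hσ
        rw [hBv j hj, hCv j' hj', hCv k' hk'] at hσ'
        exact windowF hσ hσ' (by linarith)
    by_cases hp2 : A.card = 2
    · by_cases hq0 : B.card = 0
      · by_cases hr1 : C.card = 1
        · omega
        · -- L11 : window 3a+2 vs 3a+6, r ≥ 3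
          obtain ⟨i, hi, j, hj, hij⟩ := exists_two (s := A) (by omega)
          obtain ⟨k, hk⟩ := Finset.card_pos.mp (show 0 < C.card by omega)
          obtain ⟨i', hi', j', hj', k', hk', hij', hik', hjk'⟩ :=
            exists_three (s := C) (by omega)
          have hσ := hK i j k hij (hACne i hi k hk) (hACne j hj k hk)
          have hσ' := hK i' j' k' hij' hik' hjk'
          rw [hAv i hi, hAv j hj, hCv k hk] at hσ
          rw [hCv i' hi', hCv j' hj', hCv k' hk'] at hσ'
          exact windowF hσ hσ' (by linarith)
      · by_cases hq1 : B.card = 1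
        · by_cases hr1 : C.card = 1
          · omega
          · -- L9a : window 3a+1 vs 3a+4 via 1A+2C
            obtain ⟨i, hi, j, hj, hij⟩ := exists_two (s := A) (by omega)
            obtain ⟨k, hk⟩ := Finset.card_pos.mp (show 0 < B.card by omega)
            obtain ⟨j', hj', k', hk', hjk'⟩ := exists_two (s := C) (by omega)
            have hσ := hK i j k hij (hABne i hi k hk) (hABne j hj k hk)
            have hσ' := hK i j' k' (hACne i hi j' hj') (hACne i hi k' hk') hjk'
            rw [hAv i hi, hAv j hj, hBv k hk] at hσ
            rw [hAv i hi, hCv j' hj', hCv k' hk'] at hσ'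
            exact windowF hσ hσ' (by linarith)
        · -- L9b : q ≥ 2 : window 3a+1 vs 3a+4 via 2B+1C
          obtain ⟨i, hi, j, hj, hij⟩ := exists_two (s := A) (by omega)
          obtain ⟨k, hk, k2, hk2, hkk2⟩ := exists_two (s := B) (by omega)
          obtain ⟨c1, hc1⟩ := Finset.card_pos.mp (show 0 < C.card by omega)
          have hσ := hK i j k hij (hABne i hi k hk) (hABne j hj k hk)
          have hσ' := hK k k2 c1 hkk2 (hBCne k hk c1 hc1) (hBCne k2 hk2 c1 hc1)
          rw [hAv i hi, hAv j hj, hBv k hk] at hσ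
          rw [hBv k hk, hBv k2 hk2, hCv c1 hc1] at hσ'
          exact windowF hσ hσ' (by linarith)
    · -- p ≥ 3
      by_cases hq0 : B.card = 0
      · by_cases hr1 : C.card = 1
        · -- L8
          have hq' : ((B.card:ℕ):ℝ) = 0 := by rw [hq0]; norm_num
          have hr' : ((C.card:ℕ):ℝ) = 1 := by rw [hr1]; norm_num
          obtain ⟨i, hi, j, hj, k, hk, hij, hik, hjk⟩ := exists_three (s := A) (by omega)
          have hσ := hK i j k hij hik hjk
          rw [hAv i hi, hAv j hj, hAv k hk, show a + a + a = 3*a + 0 from by ring] at hσ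
          rcases leafEq3 hu hNs hσ with key|key|key <;> rw [hq', hr'] at key <;>
            ring_nf at key <;> linarith
        · -- L7' : window 3a vs 3a+4 via 1A+2C
          obtain ⟨i, hi, j, hj, k, hk, hij, hik, hjk⟩ := exists_three (s := A) (by omega)
          obtain ⟨j', hj', k', hk', hjk'⟩ := exists_two (s := C) (by omega)
          have hσ := hK i j k hij hik hjk
          have hσ' := hK i j' k' (hACne i hi j' hj') (hACne i hi k' hk') hjk'
          rw [hAv i hi, hAv j hj, hAv k hk] at hσ
          rw [hAv i hi, hCv j' hj', hCv k' hk'] at hσ'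
          exact windowF hσ hσ' (by linarith)
      · -- L7 : window 3a vs 3a+3 via A,B,C
        obtain ⟨i, hi, j, hj, k, hk, hij, hik, hjk⟩ := exists_three (s := A) (by omega)
        obtain ⟨b1, hb1⟩ := Finset.card_pos.mp (show 0 < B.card by omega)
        obtain ⟨c1, hc1⟩ := Finset.card_pos.mp (show 0 < C.card by omega)
        have hσ := hK i j k hij hik hjk
        have hσ' := hK i b1 c1 (hABne i hi b1 hb1) (hACne i hi c1 hc1) (hBCne b1 hb1 c1 hc1)
        rw [hAv i hi, hAv j hj, hAv k hk] at hσ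
        rw [hAv i hi, hBv b1 hb1, hCv c1 hc1] at hσ'
        exact windowF hσ hσ' (by linarith)

end JAux

theorem johnsonRep_three_maximal_iff (n : ℕ) (hn : 6 ≤ n) :
    (n ≠ 8 → n ≠ 9 → JohnsonRepMaximal n 3) ∧
    ¬ JohnsonRepMaximal 8 3 ∧ ¬ JohnsonRepMaximal 9 3 :=
  ⟨fun h8 h9 => JAux.maximal hn h8 h9, JAux.not_max_eight, JAux.not_max_nine⟩
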